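/- Let σ > 0 and z₀ > 0, and let w : [0,∞) → [0,∞) be the function satisfying w(x)·e^{w(x)} = x for all x ≥ 0 (the Lambert W function restricted to [0,∞)). Define Z : [0,∞) → ℝ by Z(s) = σ√s/2 + z₀·exp(w(σ√s/(2z₀))). Then Z(0) = z₀, Z(s) > 0 for all s ≥ 0, and Z satisfies the integral equation Z(s) = z₀ + σ√s − (σ²/8)·∫₀ˢ Z(r)⁻¹ dr for all s ≥ 0. -/

import Mathlib

open Set MeasureTheory intervalIntegral Real Filter

/-- The function `Z(s) = σ√s/2 + z₀·exp(W(σ√s/(2z₀)))`, where `W` is the Lambert W function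
on `[0,∞)`, solves the integral equation `Z(s) = z₀ + σ√s − (σ²/8)·∫₀ˢ Z(r)⁻¹ dr`. -/
theorem lambert_solution_of_comparison_ODE
    (σ z₀ : ℝ) (hσ : 0 < σ) (hz₀ : 0 < z₀)
    (w : ℝ → ℝ)
    (hw : ∀ x : ℝ, 0 ≤ x → 0 ≤ w x ∧ w x * Real.exp (w x) = x)
    (Z : ℝ → ℝ)
    (hZ : ∀ s : ℝ, Z s = σ * Real.sqrt s / 2 + z₀ * Real.exp (w (σ * Real.sqrt s / (2 * z₀)))) :
    Z 0 = z₀ ∧ (∀ s : ℝ, 0 ≤ s → 0 < Z s) ∧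
      ∀ s : ℝ, 0 ≤ s →
        Z s = z₀ + σ * Real.sqrt s - σ ^ 2 / 8 * ∫ r in (0 : ℝ)..s, (Z r)⁻¹ := by
  have hw0 : w 0 = 0 := by
    rcases mul_eq_zero.1 (hw 0 le_rfl).2 with h | h
    · exact h
    · exact absurd h (Real.exp_ne_zero _)
  have hZ0 : Z 0 = z₀ := by
    rw [hZ 0]
    simp [Real.sqrt_zero, hw0]
  -- Z r ≥ z₀ for every r
  have hZge : ∀ r : ℝ, z₀ ≤ Z r := by
    intro r
    rw [hZ r]
    have h0 : (0:ℝ) ≤ σ * Real.sqrt r / (2 * z₀) := by positivity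
    have h1 : (0:ℝ) ≤ σ * Real.sqrt r / 2 := by positivity
    have h2 := (hw _ h0).1
    nlinarith [Real.one_le_exp h2]
  have hZpos : ∀ r : ℝ, 0 < Z r := fun r => lt_of_lt_of_le hz₀ (hZge r)
  refine ⟨hZ0, fun s _ => hZpos s, ?_⟩
  -- Lipschitz-type estimate for w on [0,∞), giving continuity
  have hlip : ∀ x y : ℝ, 0 ≤ x → 0 ≤ y → |w x - w y| ≤ |x - y| := by
    have key : ∀ x y : ℝ, 0 ≤ x → 0 ≤ y → x ≤ y → w x ≤ w y ∧ w y - w x ≤ y - x := by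
      intro x y hx hy hxy
      obtain ⟨ha, hax⟩ := hw x hx
      obtain ⟨hb, hby⟩ := hw y hy
      have hwxy : w x ≤ w y := by
        by_contra h
        push_neg at h
        have h1 : Real.exp (w y) ≤ Real.exp (w x) := Real.exp_le_exp.2 h.le
        nlinarith [Real.exp_pos (w x), Real.exp_pos (w y)]
      constructor
      · exact hwxy
      · have h1 : Real.exp (w x) ≤ Real.exp (w y) := Real.exp_le_exp.2 hwxy
        nlinarith [Real.one_le_exp ha]
    intro x y hx hy
    rcases le_total x y with h | h
    · obtain ⟨h1, h2⟩ := key x y hx hy h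
      rw [abs_sub_comm, abs_of_nonneg (by linarith), abs_sub_comm, abs_of_nonneg (by linarith)]
      linarith
    · obtain ⟨h1, h2⟩ := key y x hy hx h
      rw [abs_of_nonneg (by linarith), abs_of_nonneg (by linarith)]
      linarith
  have hwcont : ContinuousOn w (Ici 0) := by
    refine LipschitzOnWith.continuousOn (K := 1) ?_
    refine LipschitzOnWith.of_dist_le_mul fun x hx y hy => ?_
    rw [Real.dist_eq, Real.dist_eq]
    simpa using hlip x y hx hy
  -- derivative of w at positive points
  have hwd : ∀ x : ℝ, 0 < x →
      HasDerivAt w (Real.exp (w x) * (1 + w x))⁻¹ x := by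
    intro x hx
    have hcw : ContinuousAt w x := hwcont.continuousAt (Ici_mem_nhds hx)
    have hg : HasDerivAt (fun t => t * Real.exp t) (Real.exp (w x) * (1 + w x)) (w x) := by
      have h : HasDerivAt (fun t => t * Real.exp t) (1 * Real.exp (w x) + id (w x) * Real.exp (w x)) (w x) :=
        (hasDerivAt_id (w x)).mul (Real.hasDerivAt_exp (w x))
      convert h using 1
      simp [id]
      ring
    have hne : Real.exp (w x) * (1 + w x) ≠ 0 := by
      have := (hw x hx.le).1
      positivity
    refine hg.of_local_left_inverse hcw hne ?_
    filter_upwards [eventually_gt_nhds hx] with y hy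
    exact (hw y hy.le).2
  -- continuity of Z
  have hinner : Continuous fun s : ℝ => σ * Real.sqrt s / (2 * z₀) := by
    have := Real.continuous_sqrt
    fun_prop
  have hZcont : Continuous Z := by
    have hcw : Continuous fun s : ℝ => w (σ * Real.sqrt s / (2 * z₀)) :=
      hwcont.comp_continuous hinner fun x => by
        simp only [mem_Ici]; positivity
    have : Continuous fun s : ℝ =>
        σ * Real.sqrt s / 2 + z₀ * Real.exp (w (σ * Real.sqrt s / (2 * z₀))) :=
      ((continuous_const.mul Real.continuous_sqrt).div_const 2).add
        (continuous_const.mul (Real.continuous_exp.comp hcw))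
    exact (funext hZ : Z = _) ▸ this
  have hZinv : Continuous fun r => (Z r)⁻¹ :=
    hZcont.inv₀ fun r => (hZpos r).ne'
  -- derivative of Z at positive points
  have hZD : ∀ s : ℝ, 0 < s →
      HasDerivAt Z (σ / (2 * Real.sqrt s) - σ ^ 2 / 8 * (Z s)⁻¹) s := by
    intro s hs
    set q := Real.sqrt s with hqdef
    have hq : 0 < q := Real.sqrt_pos.2 hs
    set u := σ * q / (2 * z₀) with hudef
    have hu : 0 < u := by positivity
    set W := w u with hWdef
    set E := Real.exp W with hEdef
    have hE : 0 < E := Real.exp_pos _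
    have hW0 : 0 ≤ W := (hw u hu.le).1
    have hWE : W * E = u := (hw u hu.le).2
    have hkey : σ * q = 2 * z₀ * (W * E) := by
      rw [hWE, hudef]
      field_simp
    -- build the derivative
    have hsq : HasDerivAt Real.sqrt (1 / (2 * q)) s := Real.hasDerivAt_sqrt hs.ne'
    have hU : HasDerivAt (fun t => σ * Real.sqrt t / (2 * z₀)) (σ * (1 / (2 * q)) / (2 * z₀)) s :=
      (hsq.const_mul σ).div_const (2 * z₀)
    have hwu : HasDerivAt w (E * (1 + W))⁻¹ u := hwd u hu
    have hcomp : HasDerivAt (fun t => w (σ * Real.sqrt t / (2 * z₀)))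
        ((E * (1 + W))⁻¹ * (σ * (1 / (2 * q)) / (2 * z₀))) s := hwu.comp s hU
    have hexp : HasDerivAt (fun t => Real.exp (w (σ * Real.sqrt t / (2 * z₀))))
        (E * ((E * (1 + W))⁻¹ * (σ * (1 / (2 * q)) / (2 * z₀)))) s := by
      have h := (Real.hasDerivAt_exp W).comp s hcomp
      exact h
    have htot : HasDerivAt Z
        (σ * (1 / (2 * q)) / 2 +
          z₀ * (E * ((E * (1 + W))⁻¹ * (σ * (1 / (2 * q)) / (2 * z₀))))) s := by
      have h := ((hsq.const_mul σ).div_const 2).add (hexp.const_mul z₀)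
      exact h.congr_of_eventuallyEq (Filter.Eventually.of_forall hZ)
    convert htot using 1
    have hZs : Z s = z₀ * E * (1 + W) := by
      rw [hZ s, ← hqdef, ← hudef, ← hWdef, ← hEdef]
      nlinarith [hkey]
    rw [hZs]
    have hσeq : σ = 2 * z₀ * (W * E) / q := by
      field_simp at hkey ⊢
      linarith [hkey]
    rw [hσeq]
    have h1W : (0:ℝ) < 1 + W := by linarith
    field_simp
    ring
  -- the integral function and its derivative
  set I : ℝ → ℝ := fun s => ∫ r in (0:ℝ)..s, (Z r)⁻¹ with hIdef
  have hID : ∀ s : ℝ, HasDerivAt I (Z s)⁻¹ s := fun s =>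
    (hZinv.integral_hasStrictDerivAt 0 s).hasDerivAt
  have hIcont : Continuous I := by
    refine continuous_iff_continuousAt.2 fun s => (hID s).continuousAt
  -- the defect function G
  set G : ℝ → ℝ := fun s => Z s - z₀ - σ * Real.sqrt s + σ ^ 2 / 8 * I s with hGdef
  have hGcont : Continuous G := by
    have := Real.continuous_sqrt
    fun_prop
  have hG0 : G 0 = 0 := by
    simp [hGdef, hIdef, hZ0, intervalIntegral.integral_same, Real.sqrt_zero]
  have hGD : ∀ t : ℝ, 0 < t → HasDerivAt G 0 t := by
    intro t ht
    have hq : 0 < Real.sqrt t := Real.sqrt_pos.2 ht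
    have h1 : HasDerivAt (fun s => σ * Real.sqrt s) (σ * (1 / (2 * Real.sqrt t))) t :=
      (Real.hasDerivAt_sqrt ht.ne').const_mul σ
    have h2 : HasDerivAt (fun s => σ ^ 2 / 8 * I s) (σ ^ 2 / 8 * (Z t)⁻¹) t :=
      (hID t).const_mul _
    have h : HasDerivAt G (σ / (2 * Real.sqrt t) - σ ^ 2 / 8 * (Z t)⁻¹ - σ * (1 / (2 * Real.sqrt t)) +
        σ ^ 2 / 8 * (Z t)⁻¹) t := (((hZD t ht).sub_const z₀).sub h1).add h2
    convert h using 1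
    ring
  -- conclusion
  intro s hs
  rcases eq_or_lt_of_le hs with h | hspos
  · rw [← h]
    simp [hZ0, Real.sqrt_zero, intervalIntegral.integral_same]
  · have hconst : ∀ ε : ℝ, ε ∈ Ioc 0 s → G s = G ε := by
      intro ε ⟨hε0, hεs⟩
      have := constant_of_has_deriv_right_zero (f := G) (a := ε) (b := s)
        (hGcont.continuousOn) (fun y hy => (hGD y (lt_of_lt_of_le hε0 hy.1)).hasDerivWithinAt)
      exact this s ⟨hεs, le_rfl⟩
    have hmem : Ioc 0 s ∈ nhdsWithin (0:ℝ) (Ioi 0) := Ioc_mem_nhdsGT_of_mem ⟨le_rfl, hspos⟩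
    have ht1 : Filter.Tendsto G (nhdsWithin (0:ℝ) (Ioi 0)) (nhds (G 0)) :=
      (hGcont.continuousAt).tendsto.mono_left nhdsWithin_le_nhds
    have ht2 : Filter.Tendsto G (nhdsWithin (0:ℝ) (Ioi 0)) (nhds (G s)) := by
      refine Filter.Tendsto.congr' ?_ tendsto_const_nhds
      filter_upwards [hmem] with ε hε
      exact hconst ε hε
    have hGs : G s = G 0 := tendsto_nhds_unique ht2 ht1
    rw [hG0] at hGs
    have : Z s - z₀ - σ * Real.sqrt s + σ ^ 2 / 8 * I s = 0 := hGs
    have hI : (∫ r in (0:ℝ)..s, (Z r)⁻¹) = I s := rfl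
    rw [hI]
    linarith
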